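/- Fix λ ∈ [0,1], θ ∈ [0, π/2], φ ∈ ℝ. Let ρ = diag(λ, 1−λ), let s₁ = (cos θ, e^{iφ} sin θ), s₂ = (−e^{−iφ} sin θ, cos θ) in ℂ², and σ = λ s₁s₁† + (1−λ) s₂s₂†. Let H be the 2×2 Hermitian matrix with H₁₁ = H₂₂ = 0, H₁₂ = −i e^{−iφ}, H₂₁ = i e^{iφ}. Then exp(−iθH) ρ exp(iθH) = σ, i.e. the unitary evolution generated by H drives ρ to σ in time θ; since Θ(ρ,σ)/Q_Θ = θ for this family, the speed limit T_Θ is attained for mixed qubit states. -/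

import Mathlib

open Matrix

noncomputable section

set_option maxHeartbeats 1000000 in
private lemma expH_aux (z : ℂ) (φ : ℝ) :
    NormedSpace.exp (z • !![(0:ℂ), -Complex.I * Complex.exp (-(Complex.I * φ));
        Complex.I * Complex.exp (Complex.I * φ), 0]) =
      !![(Complex.exp z + Complex.exp (-z))/2,
          -(Complex.I * ((Complex.exp z - Complex.exp (-z))/2) * Complex.exp (-(Complex.I * φ)));
         Complex.I * ((Complex.exp z - Complex.exp (-z))/2) * Complex.exp (Complex.I * φ),
         (Complex.exp z + Complex.exp (-z))/2] := by
  set e := Complex.exp (Complex.I * φ) with he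
  have he' : Complex.exp (-(Complex.I * φ)) = e⁻¹ := by rw [Complex.exp_neg]
  have hene : e ≠ 0 := Complex.exp_ne_zero _
  set U : Matrix (Fin 2) (Fin 2) ℂ := !![1, 1; Complex.I * e, -(Complex.I * e)] with hU
  set V : Matrix (Fin 2) (Fin 2) ℂ :=
    !![1/2, 1/(2*Complex.I*e); 1/2, -(1/(2*Complex.I*e))] with hV
  have hUV : U * V = 1 := by
    ext i j
    fin_cases i <;> fin_cases j <;>
      simp [hU, hV, Matrix.mul_apply, Fin.sum_univ_two, Matrix.one_apply] <;>
      field_simp <;> ring_nf <;> simp [Complex.I_sq] <;> ring_nf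
  have hVU : V * U = 1 := by
    ext i j
    fin_cases i <;> fin_cases j <;>
      simp [hU, hV, Matrix.mul_apply, Fin.sum_univ_two, Matrix.one_apply] <;>
      field_simp <;> ring_nf <;> simp [Complex.I_sq] <;> ring_nf
  let Uu : (Matrix (Fin 2) (Fin 2) ℂ)ˣ := ⟨U, V, hUV, hVU⟩
  have hd : Matrix.diagonal ![z, -z] = !![z, 0; 0, -z] := by
    ext i j
    fin_cases i <;> fin_cases j <;> simp [Matrix.diagonal]
  have hd2 : Matrix.diagonal ![Complex.exp z, Complex.exp (-z)]
      = !![Complex.exp z, 0; 0, Complex.exp (-z)] := by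
    ext i j
    fin_cases i <;> fin_cases j <;> simp [Matrix.diagonal]
  have hconj : z • !![(0:ℂ), -Complex.I * Complex.exp (-(Complex.I * φ));
        Complex.I * Complex.exp (Complex.I * φ), 0]
      = (Uu : Matrix (Fin 2) (Fin 2) ℂ) * Matrix.diagonal ![z, -z] * (↑Uu⁻¹ : Matrix (Fin 2) (Fin 2) ℂ) := by
    show _ = U * Matrix.diagonal ![z, -z] * V
    rw [hd]
    ext i j
    fin_cases i <;> fin_cases j <;>
      simp [hU, hV, he', Matrix.mul_apply, Fin.sum_univ_two] <;>
      field_simp <;> ring_nf <;> simp [Complex.I_sq] <;> ring_nf <;> simp [he]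
  rw [hconj, Matrix.exp_units_conj, Matrix.exp_diagonal]
  have hpi : NormedSpace.exp ![z, -z] = ![Complex.exp z, Complex.exp (-z)] := by
    funext i
    fin_cases i <;> simp [Pi.exp_def, ← Complex.exp_eq_exp_ℂ]
  rw [hpi]
  show U * Matrix.diagonal ![Complex.exp z, Complex.exp (-z)] * V = _
  rw [hd2]
  ext i j
  fin_cases i <;> fin_cases j <;>
    simp [hU, hV, he', Matrix.mul_apply, Fin.sum_univ_two] <;>
    field_simp <;> ring_nf <;> simp [Complex.I_sq] <;> ring_nf

set_option maxHeartbeats 1000000 in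
theorem qubit_theta_bound_attainability (l θ φ : ℝ)
    (hl : l ∈ Set.Icc (0 : ℝ) 1)
    (hθ : θ ∈ Set.Icc (0 : ℝ) (Real.pi / 2))
    (ρ σ H : Matrix (Fin 2) (Fin 2) ℂ)
    (s₁ s₂ : Fin 2 → ℂ)
    (hs₁ : s₁ = ![(Real.cos θ : ℂ), Complex.exp (Complex.I * φ) * Real.sin θ])
    (hs₂ : s₂ = ![-(Complex.exp (-(Complex.I * φ))) * Real.sin θ, (Real.cos θ : ℂ)])
    (hρ : ρ = !![(l : ℂ), 0; 0, ((1 - l : ℝ) : ℂ)])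
    (hσ : σ = (l : ℂ) • vecMulVec s₁ (star s₁)
        + ((1 - l : ℝ) : ℂ) • vecMulVec s₂ (star s₂))
    (hH : H = !![0, -Complex.I * Complex.exp (-(Complex.I * φ));
                 Complex.I * Complex.exp (Complex.I * φ), 0]) :
    NormedSpace.exp ((-(Complex.I * (θ : ℂ))) • H) * ρ *
      NormedSpace.exp ((Complex.I * (θ : ℂ)) • H) = σ := by
  subst hs₁ hs₂ hρ hσ hH
  rw [expH_aux, expH_aux]
  have hEθ : Complex.exp (Complex.I * (θ : ℂ)) = Real.cos θ + Real.sin θ * Complex.I := by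
    rw [mul_comm, Complex.exp_mul_I]
    push_cast
    ring
  have hEθ' : Complex.exp (-(Complex.I * (θ : ℂ))) = Real.cos θ - Real.sin θ * Complex.I := by
    have h : -(Complex.I * (θ : ℂ)) = ((-θ : ℝ) : ℂ) * Complex.I := by push_cast; ring
    rw [h, Complex.exp_mul_I]
    push_cast
    rw [Complex.cos_neg, Complex.sin_neg]
    ring
  have hneg : -(-(Complex.I * (θ : ℂ))) = Complex.I * (θ : ℂ) := by ring
  rw [hneg] at *
  set e := Complex.exp (Complex.I * (φ : ℂ)) with he
  have he' : Complex.exp (-(Complex.I * (φ : ℂ))) = e⁻¹ := by rw [Complex.exp_neg]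
  have hene : e ≠ 0 := Complex.exp_ne_zero _
  have hstar : (starRingEnd ℂ) e = e⁻¹ := by
    rw [he, ← Complex.exp_conj, ← Complex.exp_neg]
    congr 1
    simp [Complex.conj_ofReal]
  have hstar' : (starRingEnd ℂ) e⁻¹ = e := by
    rw [map_inv₀, hstar, inv_inv]
  ext i j
  fin_cases i <;> fin_cases j <;>
    simp [Matrix.mul_apply, Fin.sum_univ_two, Matrix.vecMulVec_apply, hEθ, hEθ', he',
      Complex.star_def, _root_.map_mul, map_sub, map_add, Complex.conj_ofReal, Complex.conj_I,
      hstar, hstar', ← Complex.ofReal_cos, ← Complex.ofReal_sin, -Matrix.cons_vecMulVec] <;>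
    field_simp <;> ring_nf <;> simp [Complex.I_sq] <;> ring_nf
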